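/- In the polynomial ring ℤ[x₁,x₂,x₃,M] modulo (x₁x₂x₃M − x₁^a − x₂^a − x₃^a) with a ≥ 2, the pairs {x₁, x₂}, {x₁, M}, {x₂, M}, {x₃, M} each form regular sequences; consequently, the ideal D generated by x₁x₂x₃ and the three products x₁'x₂x₃, x₁x₂'x₃, x₁x₂x₃' (with xᵢ' as in the exchange relations) has codimension at least 2. -/

import Mathlib

open MvPolynomial

set_option maxHeartbeats 1000000
set_option synthInstance.maxHeartbeats 400000

noncomputable section

def markovPoly (a : ℕ) : MvPolynomial (Fin 4) ℤ :=
  X 0 * X 1 * X 2 * X 3 - X 0 ^ a - X 1 ^ a - X 2 ^ a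

/-- The images of `x₁, x₂, x₃, M` in `S = ℤ[x₁,x₂,x₃,M]/(x₁x₂x₃M − x₁^a − x₂^a − x₃^a)`. -/
def yv (a : ℕ) (i : Fin 4) : MvPolynomial (Fin 4) ℤ ⧸ Ideal.span {markovPoly a} :=
  Ideal.Quotient.mk _ (X i)

namespace MarkovAux

variable {σ : Type*} [DecidableEq σ]

/-- The algebra map killing the variable `i`. -/
def kill (i : σ) : MvPolynomial σ ℤ →ₐ[ℤ] MvPolynomial σ ℤ :=
  aeval (fun k => if k = i then 0 else X k)

@[simp] lemma kill_X_self (i : σ) : kill i (X i) = 0 := by simp [kill]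

lemma kill_X_ne (i : σ) {j : σ} (h : j ≠ i) : kill i (X j) = X j := by simp [kill, h]

lemma sub_kill_mem (i : σ) (p : MvPolynomial σ ℤ) :
    p - kill i p ∈ Ideal.span {(X i : MvPolynomial σ ℤ)} := by
  induction p using MvPolynomial.induction_on with
  | C r => simp [kill]
  | add p q hp hq =>
      have := Ideal.add_mem _ hp hq
      simpa [add_sub_add_comm] using this
  | mul_X p j hp =>
      by_cases h : j = i
      · subst h
        rw [map_mul, kill_X_self, mul_zero, sub_zero]
        exact Ideal.mul_mem_left _ p (Ideal.mem_span_singleton_self _)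
      · rw [map_mul, kill_X_ne i h]
        have e : p * X j - kill i p * X j = (p - kill i p) * X j := by ring
        rw [e]
        exact Ideal.mul_mem_right _ _ hp

lemma X_dvd_iff_kill (i : σ) (p : MvPolynomial σ ℤ) :
    (X i : MvPolynomial σ ℤ) ∣ p ↔ kill i p = 0 := by
  constructor
  · rintro ⟨w, rfl⟩; rw [map_mul, kill_X_self, zero_mul]
  · intro h
    rw [← Ideal.mem_span_singleton]
    have := sub_kill_mem i p
    rwa [h, sub_zero] at this

lemma prime_X (i : σ) : Prime (X i : MvPolynomial σ ℤ) := by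
  refine ⟨X_ne_zero i, ?_, ?_⟩
  · intro h
    obtain ⟨v, hv⟩ := h.exists_right_inv
    have := congrArg (kill i) hv
    rw [map_mul, kill_X_self, zero_mul, map_one] at this
    exact zero_ne_one this
  · intro p q hpq
    rw [X_dvd_iff_kill] at hpq ⊢
    rw [X_dvd_iff_kill]
    rw [map_mul, mul_eq_zero] at hpq
    exact hpq

lemma pow_add_pow_ne {i j : σ} (hij : i ≠ j) {a : ℕ} (ha : a ≠ 0) :
    (X i : MvPolynomial σ ℤ) ^ a + (X j) ^ a ≠ 0 := by
  intro h
  have := congrArg (coeff (Finsupp.single i a)) h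
  simp [coeff_X_pow, Finsupp.single_eq_single_iff, hij, Ne.symm hij, ha] at this

lemma pow3_ne {i j k : σ} (hij : i ≠ j) (hik : i ≠ k) {a : ℕ} (ha : a ≠ 0) :
    (X i : MvPolynomial σ ℤ) ^ a + (X j) ^ a + (X k) ^ a ≠ 0 := by
  intro h
  have := congrArg (coeff (Finsupp.single i a)) h
  simp [coeff_X_pow, Finsupp.single_eq_single_iff, hij, hik, Ne.symm hij, Ne.symm hik, ha] at this

abbrev R3 := MvPolynomial (Fin 3) ℤ

lemma coprime_cd {a : ℕ} (ha : a ≠ 0) (u : R3) (h1 : u ∣ (X 0 * X 1 * X 2 : R3))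
    (h2 : u ∣ (X 0 ^ a + X 1 ^ a + X 2 ^ a : R3)) : IsUnit u := by
  by_contra hu
  have h0 : u ≠ 0 := by
    rintro rfl
    rw [zero_dvd_iff] at h1
    exact (mul_ne_zero (mul_ne_zero (X_ne_zero _) (X_ne_zero _)) (X_ne_zero _)) h1
  obtain ⟨w, hwirr, hwdvd⟩ := WfDvdMonoid.exists_irreducible_factor hu h0
  have hwp : Prime w := UniqueFactorizationMonoid.irreducible_iff_prime.mp hwirr
  have hwc : w ∣ (X 0 * X 1 * X 2 : R3) := hwdvd.trans h1
  have hwd : w ∣ (X 0 ^ a + X 1 ^ a + X 2 ^ a : R3) := hwdvd.trans h2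
  have : ∃ k : Fin 3, w ∣ (X k : R3) := by
    rcases hwp.dvd_mul.mp hwc with h | h
    · rcases hwp.dvd_mul.mp h with h' | h'
      exacts [⟨0, h'⟩, ⟨1, h'⟩]
    · exact ⟨2, h⟩
  obtain ⟨k, hk⟩ := this
  have hassoc : Associated w (X k : R3) := hwp.associated_of_dvd (prime_X k) hk
  have hXd : (X k : R3) ∣ (X 0 ^ a + X 1 ^ a + X 2 ^ a : R3) := hassoc.symm.dvd.trans hwd
  rw [X_dvd_iff_kill] at hXd
  fin_cases k <;> simp [kill, aeval_X, zero_pow ha] at hXd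
  · exact pow_add_pow_ne (by decide) ha hXd
  · exact pow_add_pow_ne (by decide) ha hXd
  · exact pow_add_pow_ne (by decide) ha hXd

lemma const_dvd_of_eq {w z p : Polynomial R3} (hw : w.natDegree = 0) (hp : p = w * z)
    (c d : R3) (hpcd : p = Polynomial.C c * Polynomial.X - Polynomial.C d)
    (hcop : ∀ u : R3, u ∣ c → u ∣ d → IsUnit u) : IsUnit w := by
  obtain ⟨w0, rfl⟩ := Polynomial.natDegree_eq_zero.mp hw
  rw [Polynomial.isUnit_C]
  apply hcop
  · have h1 := congrArg (Polynomial.coeff · 1) (hpcd.symm.trans hp)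
    simp [Polynomial.coeff_C_mul] at h1
    exact ⟨z.coeff 1, h1⟩
  · have h0 := congrArg (Polynomial.coeff · 0) (hpcd.symm.trans hp)
    simp only [Polynomial.coeff_sub, Polynomial.coeff_C_mul, Polynomial.coeff_X_zero,
      Polynomial.coeff_C, if_pos rfl, mul_zero, zero_sub, if_true] at h0
    exact ⟨-z.coeff 0, by linear_combination -h0⟩

lemma irreducible_linear (c d : R3) (hc : c ≠ 0)
    (hcop : ∀ u : R3, u ∣ c → u ∣ d → IsUnit u) :
    Irreducible (Polynomial.C c * Polynomial.X - Polynomial.C d) := by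
  set p : Polynomial R3 := Polynomial.C c * Polynomial.X - Polynomial.C d with hpdef
  have hdeg : p.natDegree = 1 := by
    rw [hpdef, sub_eq_add_neg, ← Polynomial.C_neg]
    exact Polynomial.natDegree_linear hc
  have hp0 : p ≠ 0 := fun h => by simp [h] at hdeg
  constructor
  · exact Polynomial.not_isUnit_of_natDegree_pos p (by omega)
  · intro u v huv
    have hu0 : u ≠ 0 := fun h => hp0 (by simp [huv, h])
    have hv0 : v ≠ 0 := fun h => hp0 (by simp [huv, h])
    have hsum : u.natDegree + v.natDegree = 1 := by
      rw [← Polynomial.natDegree_mul hu0 hv0, ← huv, hdeg]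
    rcases Nat.eq_zero_or_pos u.natDegree with h | h
    · exact Or.inl (const_dvd_of_eq h huv c d hpdef hcop)
    · exact Or.inr (const_dvd_of_eq (w := v) (z := u) (by omega) (by rw [huv, mul_comm]) c d hpdef hcop)

def e4 : MvPolynomial (Fin 4) ℤ ≃+* Polynomial R3 :=
  ((renameEquiv ℤ finSuccEquivLast).trans (optionEquivLeft ℤ (Fin 3))).toRingEquiv

lemma e4_X3 : e4 (X 3) = Polynomial.X := by
  have h : finSuccEquivLast (3 : Fin 4) = none := rfl
  simp [e4, renameEquiv_apply, rename_X, h, optionEquivLeft_X_none]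

lemma e4_X_castSucc (i : Fin 3) : e4 (X i.castSucc) = Polynomial.C (X i) := by
  simp [e4, renameEquiv_apply, rename_X, finSuccEquivLast_castSucc, optionEquivLeft_X_some]

lemma e4_f (a : ℕ) : e4 (markovPoly a) =
    Polynomial.C (X 0 * X 1 * X 2 : R3) * Polynomial.X
      - Polynomial.C (X 0 ^ a + X 1 ^ a + X 2 ^ a : R3) := by
  have h0 : e4 (X 0) = Polynomial.C (X 0 : R3) := by
    have : ((0 : Fin 3).castSucc) = (0 : Fin 4) := rfl
    rw [← this, e4_X_castSucc]
  have h1 : e4 (X 1) = Polynomial.C (X 1 : R3) := by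
    have : ((1 : Fin 3).castSucc) = (1 : Fin 4) := rfl
    rw [← this, e4_X_castSucc]
  have h2 : e4 (X 2) = Polynomial.C (X 2 : R3) := by
    have : ((2 : Fin 3).castSucc) = (2 : Fin 4) := rfl
    rw [← this, e4_X_castSucc]
  rw [markovPoly]
  rw [map_sub, map_sub, map_sub, map_mul, map_mul, map_mul, map_pow, map_pow, map_pow,
    h0, h1, h2, e4_X3]
  rw [map_mul, map_mul, map_add, map_add, map_pow, map_pow, map_pow]
  ring

lemma prime_markovPoly {a : ℕ} (ha : a ≠ 0) : Prime (markovPoly a) := by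
  rw [← MulEquiv.prime_iff e4.toMulEquiv]
  have : e4.toMulEquiv (markovPoly a) = e4 (markovPoly a) := rfl
  rw [this, e4_f a]
  rw [← UniqueFactorizationMonoid.irreducible_iff_prime]
  apply irreducible_linear
  · exact mul_ne_zero (mul_ne_zero (X_ne_zero _) (X_ne_zero _)) (X_ne_zero _)
  · exact fun u h1 h2 => coprime_cd ha u h1 h2


section Upstairs

variable {a : ℕ}

lemma kill_f_0 (ha : a ≠ 0) : kill (0:Fin 4) (markovPoly a) = - (X 1 ^ a + X 2 ^ a) := by
  simp [markovPoly, kill, zero_pow ha]; ring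

lemma kill_f_1 (ha : a ≠ 0) : kill (1:Fin 4) (markovPoly a) = - (X 0 ^ a + X 2 ^ a) := by
  simp [markovPoly, kill, zero_pow ha]; ring

lemma kill_f_2 (ha : a ≠ 0) : kill (2:Fin 4) (markovPoly a) = - (X 0 ^ a + X 1 ^ a) := by
  simp [markovPoly, kill, zero_pow ha]; ring

lemma kill_f_3 (ha : a ≠ 0) : kill (3:Fin 4) (markovPoly a) = - (X 0 ^ a + X 1 ^ a + X 2 ^ a) := by
  simp [markovPoly, kill, zero_pow ha]; ring

lemma kill_f_ne (ha : a ≠ 0) (i : Fin 4) : kill i (markovPoly a) ≠ 0 := by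
  fin_cases i
  · rw [show (⟨0, by omega⟩ : Fin 4) = (0 : Fin 4) from rfl, kill_f_0 ha, neg_ne_zero]
    exact pow_add_pow_ne (by decide) ha
  · rw [show (⟨1, by omega⟩ : Fin 4) = (1 : Fin 4) from rfl, kill_f_1 ha, neg_ne_zero]
    exact pow_add_pow_ne (by decide) ha
  · rw [show (⟨2, by omega⟩ : Fin 4) = (2 : Fin 4) from rfl, kill_f_2 ha, neg_ne_zero]
    exact pow_add_pow_ne (by decide) ha
  · rw [show (⟨3, by omega⟩ : Fin 4) = (3 : Fin 4) from rfl, kill_f_3 ha, neg_ne_zero]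
    exact pow3_ne (by decide) (by decide) ha

lemma not_dvd_X (ha : a ≠ 0) (i : Fin 4) : ¬ markovPoly a ∣ X i := by
  rintro ⟨w, hw⟩
  have h := congrArg (kill i) hw
  rw [kill_X_self, map_mul] at h
  rcases mul_eq_zero.mp h.symm with h' | h'
  · exact kill_f_ne ha i h'
  · rw [← X_dvd_iff_kill] at h'
    obtain ⟨w', rfl⟩ := h'
    rw [← mul_assoc, mul_comm (markovPoly a) (X i), mul_assoc] at hw
    have h1 : (1 : MvPolynomial (Fin 4) ℤ) = markovPoly a * w' :=
      mul_left_cancel₀ (X_ne_zero i) (by rw [mul_one]; exact hw)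
    exact (prime_markovPoly ha).2.1 (IsUnit.of_mul_eq_one _ h1.symm)

lemma up_first (ha : a ≠ 0) (i : Fin 4) (Z : MvPolynomial (Fin 4) ℤ)
    (hZ : X i * Z ∈ Ideal.span {markovPoly a}) : Z ∈ Ideal.span {markovPoly a} := by
  rw [Ideal.mem_span_singleton] at hZ ⊢
  rcases (prime_markovPoly ha).2.2 _ _ hZ with h | h
  · exact absurd h (not_dvd_X ha i)
  · exact h

lemma X_not_mem_span (ha : a ≠ 0) (i : Fin 4) : X i ∉ Ideal.span {markovPoly a} := by
  rw [Ideal.mem_span_singleton]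
  exact not_dvd_X ha i

lemma kill_mem_span_pair (i : Fin 4) (Z : MvPolynomial (Fin 4) ℤ)
    (hZ : Z ∈ Ideal.span {markovPoly a, X i}) :
    kill i Z ∈ Ideal.span {kill i (markovPoly a)} := by
  rw [Ideal.mem_span_pair] at hZ
  obtain ⟨A, B, hAB⟩ := hZ
  rw [← hAB, map_add, map_mul, map_mul, kill_X_self, mul_zero, add_zero]
  exact Ideal.mul_mem_left _ _ (Ideal.mem_span_singleton_self _)

lemma kill_f_mem_pair (i : Fin 4) :
    kill i (markovPoly a) ∈ Ideal.span {markovPoly a, X i} := by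
  have h1 : markovPoly a - kill i (markovPoly a) ∈ Ideal.span {(X i : MvPolynomial (Fin 4) ℤ)} :=
    sub_kill_mem i _
  have h2 : markovPoly a ∈ Ideal.span {markovPoly a, X i} :=
    Ideal.subset_span (by simp)
  have h3 : Ideal.span {(X i : MvPolynomial (Fin 4) ℤ)} ≤ Ideal.span {markovPoly a, X i} :=
    Ideal.span_mono (by simp)
  have := Ideal.sub_mem _ h2 (h3 h1)
  simpa using this

lemma up_nzd (i j : Fin 4) (hij : j ≠ i) (hnz : kill j (kill i (markovPoly a)) ≠ 0)
    (Z : MvPolynomial (Fin 4) ℤ) (hZ : X j * Z ∈ Ideal.span {markovPoly a, X i}) :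
    Z ∈ Ideal.span {markovPoly a, X i} := by
  have hkz : kill i (X j * Z) ∈ Ideal.span {kill i (markovPoly a)} :=
    kill_mem_span_pair i _ hZ
  rw [map_mul, kill_X_ne i hij, Ideal.mem_span_singleton] at hkz
  -- X j ∣ kill i Z * ... : kill i f ∣ X j * kill i Z
  obtain ⟨Q, hQ⟩ := hkz
  have hXjQ : (X j : MvPolynomial (Fin 4) ℤ) ∣ kill i (markovPoly a) * Q := ⟨kill i Z, hQ.symm⟩
  rcases (prime_X j).2.2 _ _ hXjQ with h | h
  · exfalso
    rw [X_dvd_iff_kill] at h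
    exact hnz h
  · obtain ⟨Q', rfl⟩ := h
    have : kill i Z = kill i (markovPoly a) * Q' := by
      apply mul_left_cancel₀ (X_ne_zero j)
      rw [hQ]; ring
    have hmem : kill i Z ∈ Ideal.span {markovPoly a, X i} := by
      rw [this]
      exact Ideal.mul_mem_right _ _ (kill_f_mem_pair i)
    have hsub : Z - kill i Z ∈ Ideal.span {markovPoly a, X i} := by
      have h3 : Ideal.span {(X i : MvPolynomial (Fin 4) ℤ)} ≤ Ideal.span {markovPoly a, X i} :=
        Ideal.span_mono (by simp)
      exact h3 (sub_kill_mem i Z)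
    have := Ideal.add_mem _ hsub hmem
    simpa using this

lemma constantCoeff_f (ha : a ≠ 0) : constantCoeff (markovPoly a) = 0 := by
  simp [markovPoly, zero_pow ha]

lemma one_not_mem_triple (ha : a ≠ 0) (i j : Fin 4) :
    (1 : MvPolynomial (Fin 4) ℤ) ∉ Ideal.span {markovPoly a, X i, X j} := by
  intro h
  have hle : Ideal.span {markovPoly a, X i, X j} ≤ RingHom.ker (constantCoeff (R := ℤ) (σ := Fin 4)) := by
    rw [Ideal.span_le]
    rintro x hx
    simp only [Set.mem_insert_iff, Set.mem_singleton_iff] at hx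
    rcases hx with rfl | rfl | rfl <;>
      simp [RingHom.mem_ker, constantCoeff_f ha, constantCoeff_X]
  have := hle h
  rw [RingHom.mem_ker, map_one] at this
  exact one_ne_zero this

end Upstairs

section Downstairs

variable {a : ℕ}

local notation "S" => MvPolynomial (Fin 4) ℤ ⧸ Ideal.span {markovPoly a}

-- kill j (kill i f) nonzero facts
lemma kk01 (ha : a ≠ 0) : kill (1:Fin 4) (kill (0:Fin 4) (markovPoly a)) ≠ 0 := by
  rw [kill_f_0 ha, map_neg, map_add, map_pow, map_pow, kill_X_self,
    kill_X_ne _ (show (2:Fin 4) ≠ 1 by decide), zero_pow ha, zero_add, neg_ne_zero]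
  exact pow_ne_zero _ (X_ne_zero _)

lemma kk02 (ha : a ≠ 0) : kill (2:Fin 4) (kill (0:Fin 4) (markovPoly a)) ≠ 0 := by
  rw [kill_f_0 ha, map_neg, map_add, map_pow, map_pow, kill_X_self,
    kill_X_ne _ (show (1:Fin 4) ≠ 2 by decide), zero_pow ha, add_zero, neg_ne_zero]
  exact pow_ne_zero _ (X_ne_zero _)

lemma kk03 (ha : a ≠ 0) : kill (3:Fin 4) (kill (0:Fin 4) (markovPoly a)) ≠ 0 := by
  rw [kill_f_0 ha, map_neg, map_add, map_pow, map_pow,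
    kill_X_ne _ (show (1:Fin 4) ≠ 3 by decide),
    kill_X_ne _ (show (2:Fin 4) ≠ 3 by decide), neg_ne_zero]
  exact pow_add_pow_ne (by decide) ha

lemma kk12 (ha : a ≠ 0) : kill (2:Fin 4) (kill (1:Fin 4) (markovPoly a)) ≠ 0 := by
  rw [kill_f_1 ha, map_neg, map_add, map_pow, map_pow, kill_X_self,
    kill_X_ne _ (show (0:Fin 4) ≠ 2 by decide), zero_pow ha, add_zero, neg_ne_zero]
  exact pow_ne_zero _ (X_ne_zero _)

lemma kk13 (ha : a ≠ 0) : kill (3:Fin 4) (kill (1:Fin 4) (markovPoly a)) ≠ 0 := by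
  rw [kill_f_1 ha, map_neg, map_add, map_pow, map_pow,
    kill_X_ne _ (show (0:Fin 4) ≠ 3 by decide),
    kill_X_ne _ (show (2:Fin 4) ≠ 3 by decide), neg_ne_zero]
  exact pow_add_pow_ne (by decide) ha

lemma kk23 (ha : a ≠ 0) : kill (3:Fin 4) (kill (2:Fin 4) (markovPoly a)) ≠ 0 := by
  rw [kill_f_2 ha, map_neg, map_add, map_pow, map_pow,
    kill_X_ne _ (show (0:Fin 4) ≠ 3 by decide),
    kill_X_ne _ (show (1:Fin 4) ≠ 3 by decide), neg_ne_zero]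
  exact pow_add_pow_ne (by decide) ha

open Pointwise in
lemma ideal_smul_top {A : Type*} [CommRing A] (I : Ideal A) :
    I • (⊤ : Submodule A A) = I := by
  apply le_antisymm
  · exact Submodule.smul_le.mpr fun r hr n _ => by
      simpa [smul_eq_mul] using I.mul_mem_right n hr
  · intro z hz
    simpa using Submodule.smul_mem_smul hz (Submodule.mem_top (x := (1:A)))

open Pointwise in
lemma elt_smul_top {A : Type*} [CommRing A] (r : A) :
    r • (⊤ : Submodule A A) = (Ideal.span {r} : Ideal A) := by
  rw [← Submodule.ideal_span_singleton_smul, ideal_smul_top]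

lemma mem_span_yv (i : Fin 4) (Z : MvPolynomial (Fin 4) ℤ) :
    (Ideal.Quotient.mk (Ideal.span {markovPoly a}) Z ∈ Ideal.span {yv a i}) ↔
      Z ∈ Ideal.span {markovPoly a, X i} := by
  constructor
  · intro h
    rw [Ideal.mem_span_singleton'] at h
    obtain ⟨w, hw⟩ := h
    obtain ⟨W, rfl⟩ := Ideal.Quotient.mk_surjective w
    have hmk : Ideal.Quotient.mk (Ideal.span {markovPoly a}) (W * X i) =
        Ideal.Quotient.mk (Ideal.span {markovPoly a}) Z := by
      rw [map_mul]; exact hw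
    rw [Ideal.Quotient.eq] at hmk
    have h1 : W * X i ∈ Ideal.span {markovPoly a, X i} :=
      Ideal.mul_mem_left _ _ (Ideal.subset_span (by simp))
    have h2 : W * X i - Z ∈ Ideal.span {markovPoly a, X i} :=
      Ideal.span_mono (by simp) hmk
    have := Ideal.sub_mem _ h1 h2
    simpa using this
  · intro h
    rw [Ideal.mem_span_pair] at h
    obtain ⟨A, B, hAB⟩ := h
    rw [Ideal.mem_span_singleton']
    refine ⟨Ideal.Quotient.mk _ B, ?_⟩
    show Ideal.Quotient.mk _ B * Ideal.Quotient.mk _ (X i) = _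
    rw [← map_mul, Ideal.Quotient.eq]
    have : B * X i - Z = -(A * markovPoly a) := by linear_combination hAB
    rw [this]
    exact neg_mem (Ideal.mul_mem_left _ _ (Ideal.mem_span_singleton_self _))

lemma yv_ne (ha : a ≠ 0) (i : Fin 4) : yv a i ≠ 0 := by
  rw [yv, Ne, Ideal.Quotient.eq_zero_iff_mem]
  exact X_not_mem_span ha i

lemma first_reg (ha : a ≠ 0) (i : Fin 4) : IsSMulRegular S (yv a i) := by
  intro x y h
  obtain ⟨Xz, rfl⟩ := Ideal.Quotient.mk_surjective x
  obtain ⟨Yz, rfl⟩ := Ideal.Quotient.mk_surjective y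
  have hmk : Ideal.Quotient.mk (Ideal.span {markovPoly a}) (X i * Xz) =
      Ideal.Quotient.mk (Ideal.span {markovPoly a}) (X i * Yz) := by
    rw [map_mul, map_mul]; exact h
  rw [Ideal.Quotient.eq, ← mul_sub] at hmk
  rw [Ideal.Quotient.eq]
  exact up_first ha i _ hmk

lemma down_nzd (ha : a ≠ 0) (i j : Fin 4) (hij : j ≠ i)
    (hkk : kill j (kill i (markovPoly a)) ≠ 0) (g : S)
    (hg : yv a j * g ∈ Ideal.span {yv a i}) : g ∈ Ideal.span {yv a i} := by
  obtain ⟨G, rfl⟩ := Ideal.Quotient.mk_surjective g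
  have : Ideal.Quotient.mk (Ideal.span {markovPoly a}) (X j * G) ∈ Ideal.span {yv a i} := by
    rw [map_mul]; exact hg
  rw [mem_span_yv] at this
  rw [mem_span_yv]
  exact up_nzd i j hij hkk G this

lemma second_reg (ha : a ≠ 0) (i j : Fin 4) (hij : j ≠ i)
    (hkk : kill j (kill i (markovPoly a)) ≠ 0) :
    IsSMulRegular (QuotSMulTop (yv a i) S) (yv a j) := by
  intro m n hmn
  obtain ⟨x, rfl⟩ := Submodule.Quotient.mk_surjective _ m
  obtain ⟨y, rfl⟩ := Submodule.Quotient.mk_surjective _ n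
  dsimp only at hmn
  rw [← Submodule.Quotient.mk_smul, ← Submodule.Quotient.mk_smul, Submodule.Quotient.eq] at hmn
  rw [Submodule.Quotient.eq]
  rw [elt_smul_top] at hmn ⊢
  have : yv a j * (x - y) ∈ Ideal.span {yv a i} := by
    have e : yv a j * (x - y) = yv a j • x - yv a j • y := by
      simp [smul_eq_mul]; ring
    rw [e]; exact hmn
  exact down_nzd ha i j hij hkk _ this

lemma ofList_pair {A : Type*} [CommRing A] (u v : A) :
    Ideal.ofList [u, v] = Ideal.span {u, v} := by
  unfold Ideal.ofList
  congr 1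
  ext r
  simp

lemma pair_proper (ha : a ≠ 0) (i j : Fin 4) :
    (⊤ : Submodule S S) ≠ Ideal.ofList [yv a i, yv a j] • ⊤ := by
  intro hEq
  have h1 : (1 : S) ∈ Ideal.ofList [yv a i, yv a j] • (⊤ : Submodule S S) :=
    hEq ▸ Submodule.mem_top
  rw [ideal_smul_top, ofList_pair, Ideal.mem_span_pair] at h1
  obtain ⟨A, B, hAB⟩ := h1
  obtain ⟨A', rfl⟩ := Ideal.Quotient.mk_surjective A
  obtain ⟨B', rfl⟩ := Ideal.Quotient.mk_surjective B
  have hmk : Ideal.Quotient.mk (Ideal.span {markovPoly a}) (A' * X i + B' * X j) =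
      Ideal.Quotient.mk (Ideal.span {markovPoly a}) 1 := by
    simp only [map_add, map_mul, map_one]; exact hAB
  rw [Ideal.Quotient.eq] at hmk
  apply one_not_mem_triple ha i j
  have h2 : A' * X i + B' * X j ∈ Ideal.span {markovPoly a, X i, X j} := by
    refine Ideal.add_mem _ ?_ ?_
    · exact Ideal.mul_mem_left _ _ (Ideal.subset_span (by simp))
    · exact Ideal.mul_mem_left _ _ (Ideal.subset_span (by simp))
  have h3 : A' * X i + B' * X j - 1 ∈ Ideal.span {markovPoly a, X i, X j} :=
    Ideal.span_mono (by simp) hmk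
  have := Ideal.sub_mem _ h2 h3
  simpa using this

open RingTheory.Sequence in
lemma regular_pair (ha : a ≠ 0) (i j : Fin 4) (hij : j ≠ i)
    (hkk : kill j (kill i (markovPoly a)) ≠ 0) :
    RingTheory.Sequence.IsRegular S [yv a i, yv a j] := by
  refine ⟨?_, pair_proper ha i j⟩
  exact IsWeaklyRegular.cons (first_reg ha i)
    (IsWeaklyRegular.cons (second_reg ha i j hij hkk) (IsWeaklyRegular.nil _ _))

lemma exists_pow_of_mem_minimalPrimes {A : Type*} [CommRing A] {I Q : Ideal A}
    (hQ : Q ∈ I.minimalPrimes) {x : A} (hx : x ∈ Q) :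
    ∃ (n : ℕ) (s : A), s ∉ Q ∧ s * x ^ n ∈ I := by
  by_contra hcon
  push_neg at hcon
  have hQp : Q.IsPrime := hQ.1.1
  have h1Q : (1 : A) ∉ Q := fun h => hQp.ne_top ((Ideal.eq_top_iff_one _).mpr h)
  let M : Submonoid A :=
    { carrier := {r | ∃ n s, s ∉ Q ∧ r = s * x ^ n},
      one_mem' := ⟨0, 1, h1Q, by simp⟩,
      mul_mem' := by
        rintro r1 r2 ⟨n1, s1, hs1, rfl⟩ ⟨n2, s2, hs2, rfl⟩
        exact ⟨n1 + n2, s1 * s2, fun h => (hQp.mem_or_mem h).elim hs1 hs2, by ring⟩ }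
  have hdisj : Disjoint (I : Set A) (M : Set A) := by
    rw [Set.disjoint_left]
    rintro r hrI ⟨n, s, hs, rfl⟩
    exact hcon n s hs hrI
  obtain ⟨p, hpprime, hIp, hdisj'⟩ := Ideal.exists_le_prime_disjoint I M hdisj
  have hpQ : p ≤ Q := by
    intro r hr
    by_contra hrQ
    exact Set.disjoint_left.mp hdisj' hr ⟨0, r, hrQ, by simp⟩
  have hQle : Q ≤ p := hQ.2 ⟨hpprime, hIp⟩ hpQ
  exact Set.disjoint_left.mp hdisj' (hQle hx) ⟨1, 1, h1Q, by simp⟩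

lemma build_chain (ha : a ≠ 0) {P : Ideal S} (hP : P.IsPrime) (i j : Fin 4)
    (hij : j ≠ i) (hkk : kill j (kill i (markovPoly a)) ≠ 0)
    (hyi : yv a i ∈ P) (hyj : yv a j ∈ P) :
    ∃ Q0 Q1 : Ideal S, Q0.IsPrime ∧ Q1.IsPrime ∧ Q0 < Q1 ∧ Q1 < P := by
  haveI hfp : (Ideal.span {markovPoly a}).IsPrime :=
    (Ideal.span_singleton_prime (prime_markovPoly ha).1).mpr (prime_markovPoly ha)
  haveI : IsDomain S := Ideal.Quotient.isDomain _
  haveI := hP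
  obtain ⟨Q1, hQ1min, hQ1P⟩ := Ideal.exists_minimalPrimes_le
    (show Ideal.span {yv a i} ≤ P from Ideal.span_le.mpr (Set.singleton_subset_iff.mpr hyi))
  haveI hQ1p : Q1.IsPrime := hQ1min.1.1
  have hyiQ1 : yv a i ∈ Q1 := hQ1min.1.2 (Ideal.mem_span_singleton_self _)
  refine ⟨⊥, Q1, Ideal.bot_prime, hQ1p, ?_, ?_⟩
  · rw [bot_lt_iff_ne_bot]
    intro hbot
    rw [hbot, Ideal.mem_bot] at hyiQ1
    exact yv_ne ha i hyiQ1
  · have hyjQ1 : yv a j ∉ Q1 := by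
      intro hyjQ1
      obtain ⟨n, s, hs, hsI⟩ := exists_pow_of_mem_minimalPrimes hQ1min hyjQ1
      have key : ∀ (m : ℕ) (t : S), t * yv a j ^ m ∈ Ideal.span {yv a i} →
          t ∈ Ideal.span {yv a i} := by
        intro m
        induction m with
        | zero => intro t ht; simpa using ht
        | succ m ih =>
            intro t ht
            have h' : yv a j * (t * yv a j ^ m) ∈ Ideal.span {yv a i} := by
              have e : yv a j * (t * yv a j ^ m) = t * yv a j ^ (m + 1) := by ring
              rw [e]; exact ht
            exact ih _ (down_nzd ha i j hij hkk _ h')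
      exact hs (hQ1min.1.2 (key n s hsI))
    exact lt_of_le_of_ne hQ1P (fun h => hyjQ1 (h ▸ hyj))

end Downstairs

end MarkovAux

/-- In `S = ℤ[x₁,x₂,x₃,M]/(x₁x₂x₃M − x₁^a − x₂^a − x₃^a)` with `a ≥ 2`, the pairs
`{x₁,x₂}`, `{x₁,M}`, `{x₂,M}`, `{x₃,M}` are regular sequences, and consequently the deep
ideal `D = (x₁x₂x₃, x₁'x₂x₃, x₁x₂'x₃, x₁x₂x₃')` has codimension at least 2: every prime
containing `D` admits a chain of primes `Q₀ < Q₁` strictly below it. -/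
theorem markov_regular_sequences_codim (a : ℕ) (ha : 2 ≤ a) :
    RingTheory.Sequence.IsRegular (MvPolynomial (Fin 4) ℤ ⧸ Ideal.span {markovPoly a})
      [yv a 0, yv a 1] ∧
    RingTheory.Sequence.IsRegular (MvPolynomial (Fin 4) ℤ ⧸ Ideal.span {markovPoly a})
      [yv a 0, yv a 3] ∧
    RingTheory.Sequence.IsRegular (MvPolynomial (Fin 4) ℤ ⧸ Ideal.span {markovPoly a})
      [yv a 1, yv a 3] ∧
    RingTheory.Sequence.IsRegular (MvPolynomial (Fin 4) ℤ ⧸ Ideal.span {markovPoly a})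
      [yv a 2, yv a 3] ∧
    (∀ P : Ideal (MvPolynomial (Fin 4) ℤ ⧸ Ideal.span {markovPoly a}), P.IsPrime →
      Ideal.span {yv a 0 * yv a 1 * yv a 2,
        (yv a 1 * yv a 2 * yv a 3 - yv a 0 ^ a) * yv a 1 * yv a 2,
        yv a 0 * (yv a 0 * yv a 2 * yv a 3 - yv a 1 ^ a) * yv a 2,
        yv a 0 * yv a 1 * (yv a 0 * yv a 1 * yv a 3 - yv a 2 ^ a)} ≤ P →
      ∃ Q0 Q1 : Ideal (MvPolynomial (Fin 4) ℤ ⧸ Ideal.span {markovPoly a}),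
        Q0.IsPrime ∧ Q1.IsPrime ∧ Q0 < Q1 ∧ Q1 < P) := by
  have ha' : a ≠ 0 := by omega
  refine ⟨MarkovAux.regular_pair ha' 0 1 (by decide) (MarkovAux.kk01 ha'),
          MarkovAux.regular_pair ha' 0 3 (by decide) (MarkovAux.kk03 ha'),
          MarkovAux.regular_pair ha' 1 3 (by decide) (MarkovAux.kk13 ha'),
          MarkovAux.regular_pair ha' 2 3 (by decide) (MarkovAux.kk23 ha'), ?_⟩
  intro P hP hDP
  have hg1 : yv a 0 * yv a 1 * yv a 2 ∈ P := hDP (Ideal.subset_span (by simp))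
  have hg2 : (yv a 1 * yv a 2 * yv a 3 - yv a 0 ^ a) * yv a 1 * yv a 2 ∈ P :=
    hDP (Ideal.subset_span (by simp))
  have hg3 : yv a 0 * (yv a 0 * yv a 2 * yv a 3 - yv a 1 ^ a) * yv a 2 ∈ P :=
    hDP (Ideal.subset_span (by simp))
  have hg4 : yv a 0 * yv a 1 * (yv a 0 * yv a 1 * yv a 3 - yv a 2 ^ a) ∈ P :=
    hDP (Ideal.subset_span (by simp))
  rcases hP.mem_or_mem hg1 with h01 | hy2
  · rcases hP.mem_or_mem h01 with hy0 | hy1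
    · -- y0 ∈ P
      have hy0a : yv a 0 ^ a ∈ P := Ideal.pow_mem_of_mem P hy0 a (by omega)
      have hsum := P.add_mem hg2 (P.mul_mem_right (yv a 1 * yv a 2) hy0a)
      have e : (yv a 1 * yv a 2 * yv a 3 - yv a 0 ^ a) * yv a 1 * yv a 2 +
          yv a 0 ^ a * (yv a 1 * yv a 2) =
          yv a 3 * ((yv a 1 * yv a 2) * (yv a 1 * yv a 2)) := by ring
      rw [e] at hsum
      rcases hP.mem_or_mem hsum with hy3 | hprod
      · exact MarkovAux.build_chain ha' hP 0 3 (by decide) (MarkovAux.kk03 ha') hy0 hy3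
      · have h12 : yv a 1 * yv a 2 ∈ P := (hP.mem_or_mem hprod).elim id id
        rcases hP.mem_or_mem h12 with hy1 | hy2
        · exact MarkovAux.build_chain ha' hP 0 1 (by decide) (MarkovAux.kk01 ha') hy0 hy1
        · exact MarkovAux.build_chain ha' hP 0 2 (by decide) (MarkovAux.kk02 ha') hy0 hy2
    · -- y1 ∈ P
      have hy1a : yv a 1 ^ a ∈ P := Ideal.pow_mem_of_mem P hy1 a (by omega)
      have hsum := P.add_mem hg3 (P.mul_mem_right (yv a 0 * yv a 2) hy1a)
      have e : yv a 0 * (yv a 0 * yv a 2 * yv a 3 - yv a 1 ^ a) * yv a 2 +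
          yv a 1 ^ a * (yv a 0 * yv a 2) =
          yv a 3 * ((yv a 0 * yv a 2) * (yv a 0 * yv a 2)) := by ring
      rw [e] at hsum
      rcases hP.mem_or_mem hsum with hy3 | hprod
      · exact MarkovAux.build_chain ha' hP 1 3 (by decide) (MarkovAux.kk13 ha') hy1 hy3
      · have h02 : yv a 0 * yv a 2 ∈ P := (hP.mem_or_mem hprod).elim id id
        rcases hP.mem_or_mem h02 with hy0 | hy2
        · exact MarkovAux.build_chain ha' hP 0 1 (by decide) (MarkovAux.kk01 ha') hy0 hy1
        · exact MarkovAux.build_chain ha' hP 1 2 (by decide) (MarkovAux.kk12 ha') hy1 hy2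
  · -- y2 ∈ P
    have hy2a : yv a 2 ^ a ∈ P := Ideal.pow_mem_of_mem P hy2 a (by omega)
    have hsum := P.add_mem hg4 (P.mul_mem_right (yv a 0 * yv a 1) hy2a)
    have e : yv a 0 * yv a 1 * (yv a 0 * yv a 1 * yv a 3 - yv a 2 ^ a) +
        yv a 2 ^ a * (yv a 0 * yv a 1) =
        yv a 3 * ((yv a 0 * yv a 1) * (yv a 0 * yv a 1)) := by ring
    rw [e] at hsum
    rcases hP.mem_or_mem hsum with hy3 | hprod
    · exact MarkovAux.build_chain ha' hP 2 3 (by decide) (MarkovAux.kk23 ha') hy2 hy3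
    · have h01' : yv a 0 * yv a 1 ∈ P := (hP.mem_or_mem hprod).elim id id
      rcases hP.mem_or_mem h01' with hy0 | hy1
      · exact MarkovAux.build_chain ha' hP 0 2 (by decide) (MarkovAux.kk02 ha') hy0 hy2
      · exact MarkovAux.build_chain ha' hP 1 2 (by decide) (MarkovAux.kk12 ha') hy1 hy2
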